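/- First intersector theorem: let p, q, k be integers with p, q ≥ 1, p ≡ q (mod 2), and k ≥ κ, where κ = 1 if q < p+1 and κ = 0 if q > p+1. Set p' = q−1+k, q' = p+1+k and m₀ = p+q+k−1. Then: (i) h^{m₀}_{p,q} = h^{m₀}_{p',q'}; (ii) if u, v are positive integers with u ≡ v (mod 2) and uv ≤ p'q', and m is a real number with m ≥ m₀ such that h^m_{p,q} = h^m_{u,v}, then either (u,v) = (p,q), or (u,v) = (p',q') and m = m₀. (Thus C_{q−1+k, p+1+k} is the first curve of level p'q'/2 to intersect C_{p,q} starting from c = 3/2, the intersection occurring at m = p+q+k−1.) -/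
import Mathlib


/-- `h^m_{p,q} = (((m+2)p − mq)² − 4) / (8m(m+2))`. -/
noncomputable def hPQ (m : ℝ) (p q : ℤ) : ℝ :=
  (((m + 2) * (p : ℝ) - m * (q : ℝ)) ^ 2 - 4) / (8 * m * (m + 2))

/-- First intersector theorem: for `p, q ≥ 1` of the same parity, `κ = 1` if `q < p+1`
and `κ = 0` if `q > p+1`, and `k ≥ κ`, set `p' = q−1+k`, `q' = p+1+k`, `m₀ = p+q+k−1`.
Then `C_{p',q'}` meets `C_{p,q}` at `m = m₀`, and it is the first curve of level
`p'q'/2` to intersect `C_{p,q}` starting from `c = 3/2`: any curve `C_{u,v}` of level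
`≤ p'q'/2` through a point of `C_{p,q}` with `m ≥ m₀` is `C_{p,q}` itself, or is
`C_{p',q'}` with `m = m₀`. -/
theorem first_intersector (p q k : ℤ) (hp : 1 ≤ p) (hq : 1 ≤ q) (hpar : p % 2 = q % 2)
    (hk : (if q < p + 1 then (1 : ℤ) else 0) ≤ k) :
    hPQ ((p + q + k - 1 : ℤ) : ℝ) p q = hPQ ((p + q + k - 1 : ℤ) : ℝ) (q - 1 + k) (p + 1 + k) ∧
    (∀ u v : ℤ, 1 ≤ u → 1 ≤ v → u % 2 = v % 2 → u * v ≤ (q - 1 + k) * (p + 1 + k) →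
      ∀ m : ℝ, ((p + q + k - 1 : ℤ) : ℝ) ≤ m → hPQ m p q = hPQ m u v →
        (u = p ∧ v = q) ∨
        (u = q - 1 + k ∧ v = p + 1 + k ∧ m = ((p + q + k - 1 : ℤ) : ℝ))) := by
  have hqk : 2 ≤ q + k := by split_ifs at hk <;> omega
  have hk0 : 0 ≤ k := by split_ifs at hk <;> omega
  -- m₀ = p + q + k - 1 ≥ p + 1 ≥ 2
  have hm₀p : p + 1 ≤ p + q + k - 1 := by omega
  have hm₀2 : (2 : ℤ) ≤ p + q + k - 1 := by omega
  constructor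
  · unfold hPQ; push_cast; ring
  · intro u v hu hv hparuv huv m hm heq
    have hm2 : (2 : ℝ) ≤ m := by
      have h2 : ((2 : ℤ) : ℝ) ≤ ((p + q + k - 1 : ℤ) : ℝ) := by exact_mod_cast hm₀2
      have hm' := hm
      push_cast at h2 hm' ⊢; linarith
    have hmpos : 0 < m := by linarith
    have hm₀R : ((p : ℝ) + q + k - 1) ≤ m := by push_cast at hm; linarith
    have hd : (8 * m * (m + 2)) ≠ 0 := by positivity
    have key : ((m + 2) * (p : ℝ) - m * (q : ℝ)) ^ 2
        = ((m + 2) * (u : ℝ) - m * (v : ℝ)) ^ 2 := by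
      unfold hPQ at heq
      field_simp at heq
      linarith
    rcases sq_eq_sq_iff_eq_or_eq_neg.mp key with hcase | hcase
    · -- plus case : m * (p - u - q + v) = 2 * (u - p)
      obtain ⟨c, hc⟩ : ∃ c, p - u - q + v = 2 * c := ⟨(p - u - q + v) / 2, by omega⟩
      have hcR : (p : ℝ) - u - q + v = 2 * (c : ℝ) := by exact_mod_cast hc
      have h1 : m * ((p : ℝ) - u - q + v) = 2 * ((u : ℝ) - p) := by linear_combination hcase
      have hmc : m * (c : ℝ) = (u : ℝ) - p := by
        rw [hcR] at h1; linear_combination h1 / 2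
      by_cases hup : u = p
      · left
        refine ⟨hup, ?_⟩
        have hc0 : (c : ℝ) = 0 := by
          have : m * (c : ℝ) = 0 := by rw [hmc, hup]; ring
          exact (mul_eq_zero.mp this).resolve_left (by positivity)
        have : c = 0 := by exact_mod_cast hc0
        omega
      · rcases lt_or_gt_of_ne hup with hlt | hgt
        · -- u < p : contradiction
          exfalso
          have hcneg : c ≤ -1 := by
            by_contra hcon
            push_neg at hcon
            have h0 : (0 : ℝ) ≤ (c : ℝ) := by exact_mod_cast (by omega : (0:ℤ) ≤ c)
            have : (0 : ℝ) ≤ m * c := mul_nonneg (le_of_lt hmpos) h0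
            have : (0 : ℝ) < (p : ℝ) - u := by exact_mod_cast (by omega : (0:ℤ) < p - u)
            linarith [hmc]
          have hcnegR : (c : ℝ) ≤ -1 := by exact_mod_cast hcneg
          have : (u : ℝ) - p ≤ -m := by nlinarith [hmc]
          have hfin : (u : ℝ) ≤ ((p - (p + q + k - 1) : ℤ) : ℝ) := by push_cast; linarith
          have : u ≤ p - (p + q + k - 1) := by exact_mod_cast hfin
          omega
        · -- u > p : uv too large
          exfalso
          have hcpos : 1 ≤ c := by
            by_contra hcon
            push_neg at hcon
            have h0 : (c : ℝ) ≤ 0 := by exact_mod_cast (by omega : c ≤ (0:ℤ))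
            have : m * c ≤ 0 := mul_nonpos_of_nonneg_of_nonpos (le_of_lt hmpos) h0
            have : (0 : ℝ) < (u : ℝ) - p := by exact_mod_cast (by omega : (0:ℤ) < u - p)
            linarith [hmc]
          have hcposR : (1 : ℝ) ≤ (c : ℝ) := by exact_mod_cast hcpos
          have hub : ((p : ℝ) + q + k - 1) ≤ (u : ℝ) - p := by nlinarith [hmc]
          have hubZ : p + q + k - 1 ≤ u - p := by exact_mod_cast (by push_cast; linarith : ((p + q + k - 1 : ℤ) : ℝ) ≤ ((u - p : ℤ) : ℝ))
          have hvb : u + q - p + 2 ≤ v := by omega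
          have : (q - 1 + k) * (p + 1 + k) < u * v := by
            have h1 : q - 1 + k < u := by omega
            have h2 : p + 1 + k < v := by omega
            exact mul_lt_mul'' h1 h2 (by omega) (by omega)
          omega
    · -- minus case : m * (q + v - p - u) = 2 * (p + u)
      obtain ⟨t, ht⟩ : ∃ t, q + v - p - u = 2 * t := ⟨(q + v - p - u) / 2, by omega⟩
      have htR : (q : ℝ) + v - p - u = 2 * (t : ℝ) := by exact_mod_cast ht
      have h1 : m * ((q : ℝ) + v - p - u) = 2 * ((p : ℝ) + u) := by linear_combination -hcase
      have hmt : m * (t : ℝ) = (p : ℝ) + u := by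
        rw [htR] at h1; linear_combination h1 / 2
      have ht1 : 1 ≤ t := by
        by_contra hcon
        push_neg at hcon
        have h0 : (t : ℝ) ≤ 0 := by exact_mod_cast (by omega : t ≤ (0:ℤ))
        have : m * t ≤ 0 := mul_nonpos_of_nonneg_of_nonpos (le_of_lt hmpos) h0
        have : (0 : ℝ) < (p : ℝ) + u := by exact_mod_cast (by omega : (0:ℤ) < p + u)
        linarith [hmt]
      by_cases htt : t = 1
      · -- m = p + u
        have hmpu : m = (p : ℝ) + u := by rw [htt] at hmt; push_cast at hmt; linarith
        have hub : q + k - 1 ≤ u := by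
          have : ((p + q + k - 1 : ℤ) : ℝ) ≤ ((p + u : ℤ) : ℝ) := by push_cast; push_cast at hm; linarith
          have hpu : p + q + k - 1 ≤ p + u := by exact_mod_cast this
          omega
        have hvv : v = u + p - q + 2 := by omega
        have hue : u = q - 1 + k := by
          by_contra hcon
          have h1 : q - 1 + k < u := by omega
          have h2 : p + 1 + k < v := by omega
          have : (q - 1 + k) * (p + 1 + k) < u * v :=
            mul_lt_mul'' h1 h2 (by omega) (by omega)
          omega
        right
        refine ⟨hue, by omega, ?_⟩
        rw [hmpu]
        exact_mod_cast congrArg (fun z : ℤ => (z : ℝ)) (by omega : p + u = p + q + k - 1)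
      · -- t ≥ 2 : uv too large
        exfalso
        have ht2 : 2 ≤ t := by omega
        have ht2R : (2 : ℝ) ≤ (t : ℝ) := by exact_mod_cast ht2
        have hub : 2 * ((p : ℝ) + q + k - 1) ≤ (p : ℝ) + u := by nlinarith [hmt]
        have hubZ : 2 * (p + q + k - 1) ≤ p + u := by
          exact_mod_cast (by push_cast; linarith : ((2 * (p + q + k - 1) : ℤ) : ℝ) ≤ ((p + u : ℤ) : ℝ))
        have hvb : u + p - q + 4 ≤ v := by omega
        have h1 : q - 1 + k < u := by omega
        have h2 : p + 1 + k < v := by omega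
        have : (q - 1 + k) * (p + 1 + k) < u * v :=
          mul_lt_mul'' h1 h2 (by omega) (by omega)
        omega
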